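/- For all real numbers z > t > 1, one has ln G(t) / ln G(z) > z/t, where G(x) = (x−1)/(x+1). -/

import Mathlib

noncomputable section

/-- `G(x) = (x-1)/(x+1)`. -/
def Gfun (x : ℝ) : ℝ := (x - 1) / (x + 1)

/-- Classic inequality: for `v > 1`, `log v < (v - 1/v)/2`. -/
lemma log_lt_half_sub_inv {v : ℝ} (hv : 1 < v) :
    Real.log v < (v - v⁻¹)/2 := by
  have key : StrictMonoOn (fun x : ℝ => (x - x⁻¹)/2 - Real.log x) (Set.Ici 1) := by
    apply strictMonoOn_of_deriv_pos (convex_Ici 1)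
    · apply ContinuousOn.sub
      · exact ((continuousOn_id.sub (continuousOn_id.inv₀
          (fun x hx => by simp at hx; positivity))).div_const 2)
      · exact Real.continuousOn_log.mono (fun x hx => by simp at hx ⊢; positivity)
    · intro x hx
      rw [interior_Ici] at hx
      have hx1 : (1:ℝ) < x := hx
      have hx0 : x ≠ 0 := by positivity
      have h1 : HasDerivAt (fun x : ℝ => (x - x⁻¹)/2 - Real.log x)
          ((1 - (-(x^2)⁻¹))/2 - x⁻¹) x := by
        exact (((hasDerivAt_id x).sub (hasDerivAt_inv hx0)).div_const 2).sub
          (Real.hasDerivAt_log hx0)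
      rw [h1.deriv]
      have hne : x - 1 ≠ 0 := by linarith
      have : (1 - (-(x^2)⁻¹))/2 - x⁻¹ = (x-1)^2/(2*x^2) := by field_simp; ring
      rw [this]; positivity
  have h := key (Set.self_mem_Ici) (Set.mem_Ici.2 hv.le) hv
  simp at h
  linarith

lemma mul_log_strictMono : StrictMonoOn
    (fun x : ℝ => x * (Real.log (x-1) - Real.log (x+1))) (Set.Ioi 1) := by
  apply strictMonoOn_of_deriv_pos (convex_Ioi 1)
  · apply ContinuousOn.mul continuousOn_id
    apply ContinuousOn.sub
    · exact Real.continuousOn_log.comp (continuousOn_id.sub continuousOn_const)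
        (fun x hx => by simp at hx ⊢; linarith)
    · exact Real.continuousOn_log.comp (continuousOn_id.add continuousOn_const)
        (fun x hx => by simp at hx ⊢; linarith)
  · intro x hx
    rw [interior_Ioi] at hx
    have hx1 : (1:ℝ) < x := hx
    have hm : x - 1 ≠ 0 := by linarith
    have hp : x + 1 ≠ 0 := by linarith
    have hd : HasDerivAt (fun x : ℝ => x * (Real.log (x-1) - Real.log (x+1)))
        (1 * (Real.log (x-1) - Real.log (x+1)) + x * (1/(x-1) - 1/(x+1))) x := by
      have d1 : HasDerivAt (fun x : ℝ => Real.log (x-1)) (1/(x-1)) x := by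
        simpa [Function.comp_def] using (Real.hasDerivAt_log hm).comp x ((hasDerivAt_id x).sub_const 1)
      have d2 : HasDerivAt (fun x : ℝ => Real.log (x+1)) (1/(x+1)) x := by
        simpa [Function.comp_def] using (Real.hasDerivAt_log hp).comp x ((hasDerivAt_id x).add_const 1)
      exact (hasDerivAt_id x).mul (d1.sub d2)
    rw [hd.deriv]
    -- positivity of derivative
    set v : ℝ := (x+1)/(x-1) with hv
    have hv1 : 1 < v := by
      rw [hv, lt_div_iff₀ (by linarith)]; linarith
    have hlog := log_lt_half_sub_inv hv1
    have hlv : Real.log v = Real.log (x+1) - Real.log (x-1) :=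
      Real.log_div hp hm
    have hval : (v - v⁻¹)/2 = x * (1/(x-1) - 1/(x+1)) := by
      rw [hv]; field_simp; ring
    rw [hlv, hval] at hlog
    linarith

/-- For all reals `z > t > 1`, `ln G(t) / ln G(z) > z/t`, where `G(x) = (x-1)/(x+1)`. -/
theorem statement14 (t z : ℝ) (ht : 1 < t) (hz : t < z) :
    z / t < Real.log (Gfun t) / Real.log (Gfun z) := by
  have ht0 : (0:ℝ) < t := by linarith
  have hz1 : (1:ℝ) < z := by linarith
  have hlogG : ∀ x : ℝ, 1 < x → Real.log (Gfun x) = Real.log (x-1) - Real.log (x+1) := by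
    intro x hx
    exact Real.log_div (by linarith) (by linarith)
  have hmono := mul_log_strictMono (Set.mem_Ioi.2 ht) (Set.mem_Ioi.2 hz1) hz
  simp only at hmono
  rw [← hlogG t ht, ← hlogG z hz1] at hmono
  have hGz0 : (0:ℝ) < Gfun z := by
    unfold Gfun; apply div_pos <;> linarith
  have hGz1 : Gfun z < 1 := by
    unfold Gfun; rw [div_lt_one (by linarith)]; linarith
  have hbz : Real.log (Gfun z) < 0 := Real.log_neg hGz0 hGz1
  rw [← neg_div_neg_eq (Real.log (Gfun t)) (Real.log (Gfun z)),
    div_lt_div_iff₀ ht0 (neg_pos.2 hbz)]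
  nlinarith [hmono]
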